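/- Let T = ⟨P, 𝒢, O⟩ be a plan-recognition theory with O pairwise distinct and P' the transformed domain with c(o_a) = c(a). For every goal G ⊆ F, G is solvable in P if and only if G is solvable in P', and in that case c*_P(G) = c*_{P'}(G): the new actions o_a neither enable new plans for G nor change the optimal cost of achieving G. -/

import Mathlib

/-- A STRIPS planning domain: fluents `F`, actions `A`, an initial state `I`,
and precondition/add/delete lists for each action.  A planning problem is
obtained by pairing a domain with a goal `G : Set F`. -/
structure Strips (F A : Type) where
  I : Set F
  pre : A → Set F
  add : A → Set F
  del : A → Set F

namespace Strips

variable {F A : Type}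

/-- The result of applying action `a` in state `s`: `(s \ Del(a)) ∪ Add(a)`. -/
def applyA (P : Strips F A) (s : Set F) (a : A) : Set F := (s \ P.del a) ∪ P.add a

/-- `Exec P s π t`: the action sequence `π` is applicable successively from
state `s` (each action's precondition holds when it is applied) and leads to
the state `t`. -/
inductive Exec (P : Strips F A) : Set F → List A → Set F → Prop
  | nil (s : Set F) : Exec P s [] s
  | cons {s t : Set F} {a : A} {π : List A} :
      P.pre a ⊆ s → Exec P (P.applyA s a) π t → Exec P s (a :: π) t

/-- `π` is a plan for the goal `G` in the domain `P`: it is applicable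
successively from the initial state and its final state contains `G`. -/
def IsPlan (P : Strips F A) (G : Set F) (π : List A) : Prop :=
  ∃ t, Exec P P.I π t ∧ G ⊆ t

/-- The cost of a plan: the sum of the costs of its actions. -/
def planCost (c : A → ℝ) (π : List A) : ℝ := (π.map c).sum

/-- An optimal plan for `G`: a plan for `G` of minimum cost among all plans for `G`. -/
def IsOptimalPlan (P : Strips F A) (c : A → ℝ) (G : Set F) (π : List A) : Prop :=
  P.IsPlan G π ∧ ∀ π', P.IsPlan G π' → planCost c π ≤ planCost c π'

/-- `c*_P(G)`: the optimal (minimum) cost of achieving `G` in `P`. -/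
noncomputable def cstar (P : Strips F A) (c : A → ℝ) (G : Set F) : ℝ :=
  sInf (planCost c '' {π | P.IsPlan G π})

/-- An action sequence `π` satisfies the observation sequence `O` iff there is a
strictly monotonic function `f` from observation indices into action indices
such that the `f j`-th action of `π` equals the `j`-th observation. -/
def Satisfies (π O : List A) : Prop :=
  ∃ f : Fin O.length → Fin π.length, StrictMono f ∧ ∀ j, π.get (f j) = O.get j

end Strips

/-- The transformed domain `P'` of a plan-recognition theory `⟨P, 𝒢, O⟩`:
fluents `F' = F ⊕ Fin m` (the fluent `Sum.inr j` is `p_{o_j}`), actions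
`A' = A ⊕ Fin m` (the action `Sum.inr j` is the new action `o_{o_j}`),
initial state `I' = I`.  The new action `o_{o_j}` has the same precondition,
add and delete lists as the observed action `o_j = O.get j`, except that
`p_{o_j}` is added to its add list and `p_{o_{j-1}}` (for the observation
immediately preceding `o_j` in `O`, if any, i.e. when `j > 0`) is added to its
precondition. -/
def Strips.transform (P : Strips F A) (O : List A) :
    Strips (F ⊕ Fin O.length) (A ⊕ Fin O.length) where
  I := Sum.inl '' P.I
  pre := fun x => match x with
    | Sum.inl a => Sum.inl '' P.pre a
    | Sum.inr j => Sum.inl '' P.pre (O.get j) ∪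
        {p | ∃ _ : 0 < (j : ℕ), p = Sum.inr
          (⟨(j : ℕ) - 1, Nat.lt_of_le_of_lt (Nat.sub_le _ _) j.isLt⟩ : Fin O.length)}
  add := fun x => match x with
    | Sum.inl a => Sum.inl '' P.add a
    | Sum.inr j => insert (Sum.inr j) (Sum.inl '' P.add (O.get j))
  del := fun x => match x with
    | Sum.inl a => Sum.inl '' P.del a
    | Sum.inr j => Sum.inl '' P.del (O.get j)

/-- The set `F_o` of new fluents `p_a`, `a ∈ O`, of the transformed domain. -/
def obsFluents {F : Type} (O : List A) : Set (F ⊕ Fin O.length) := Set.range Sum.inr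

/-- The transformed goal `G' = G ∪ F_o`. -/
def goalTransform {F : Type} (O : List A) (G : Set F) : Set (F ⊕ Fin O.length) :=
  Sum.inl '' G ∪ Set.range Sum.inr

/-- The cost function of the transformed domain: `c(o_a) = c(a)`. -/
def costTransform (c : A → ℝ) (O : List A) : A ⊕ Fin O.length → ℝ :=
  Sum.elim c (fun j => c (O.get j))

section Aux

variable {F A : Type}

open Strips

/-- Projection of transformed actions back to original actions. -/
def projA (O : List A) : A ⊕ Fin O.length → A := Sum.elim id O.get

lemma preimage_inl_image (s : Set F) :
    (Sum.inl ⁻¹' (Sum.inl '' s : Set (F ⊕ Fin n)) : Set F) = s :=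
  Set.preimage_image_eq s Sum.inl_injective

lemma applyA_proj (P : Strips F A) (O : List A) (s' : Set (F ⊕ Fin O.length))
    (a' : A ⊕ Fin O.length) :
    Sum.inl ⁻¹' ((P.transform O).applyA s' a') =
      P.applyA (Sum.inl ⁻¹' s') (projA O a') := by
  cases a' with
  | inl a =>
      ext f
      simp [Strips.applyA, Strips.transform, projA]
  | inr j =>
      ext f
      simp [Strips.applyA, Strips.transform, projA]

lemma exec_proj (P : Strips F A) (O : List A) {s' t' : Set (F ⊕ Fin O.length)}
    {π' : List (A ⊕ Fin O.length)} (h : (P.transform O).Exec s' π' t') :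
    P.Exec (Sum.inl ⁻¹' s') (π'.map (projA O)) (Sum.inl ⁻¹' t') := by
  induction h with
  | nil s => exact Strips.Exec.nil _
  | @cons s t a π hpre hexec ih =>
      refine Strips.Exec.cons ?_ ?_
      · intro f hf
        cases a
        case inl b => exact hpre ⟨f, hf, rfl⟩
        case inr j => exact hpre (Or.inl ⟨f, hf, rfl⟩)
      · rw [← applyA_proj]; exact ih

lemma applyA_embed (P : Strips F A) (O : List A) (s : Set F) (a : A) :
    (Sum.inl '' (P.applyA s a) : Set (F ⊕ Fin O.length)) =
      (P.transform O).applyA (Sum.inl '' s) (Sum.inl a) := by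
  simp [Strips.applyA, Strips.transform, Set.image_union,
    Set.image_diff Sum.inl_injective]

lemma exec_embed (P : Strips F A) (O : List A) {s t : Set F} {π : List A}
    (h : P.Exec s π t) :
    (P.transform O).Exec (Sum.inl '' s) (π.map Sum.inl) (Sum.inl '' t) := by
  induction h with
  | nil s => exact Strips.Exec.nil _
  | @cons s t a π hpre hexec ih =>
      refine Strips.Exec.cons (Set.image_mono hpre) ?_
      rw [← applyA_embed]; exact ih

lemma cost_proj (c : A → ℝ) (O : List A) (π' : List (A ⊕ Fin O.length)) :
    planCost (costTransform c O) π' = planCost c (π'.map (projA O)) := by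
  simp only [planCost, List.map_map]
  congr 1
  apply List.map_congr_left
  intro a _
  cases a <;> rfl

lemma cost_embed (c : A → ℝ) (O : List A) (π : List A) :
    planCost (costTransform c O) (π.map Sum.inl) = planCost c π := by
  simp only [planCost, List.map_map]
  rfl

lemma plan_embed (P : Strips F A) (O : List A) (G : Set F) (π : List A)
    (h : P.IsPlan G π) :
    (P.transform O).IsPlan (Sum.inl '' G) (π.map Sum.inl) := by
  obtain ⟨t, hee, hg⟩ := h
  exact ⟨Sum.inl '' t, exec_embed P O hee, Set.image_mono hg⟩

lemma plan_proj (P : Strips F A) (O : List A) (G : Set F)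
    (π' : List (A ⊕ Fin O.length))
    (h : (P.transform O).IsPlan (Sum.inl '' G) π') :
    P.IsPlan G (π'.map (projA O)) := by
  obtain ⟨t, he, hg⟩ := h
  have := exec_proj P O he
  rw [show (P.transform O).I = Sum.inl '' P.I from rfl, preimage_inl_image] at this
  refine ⟨Sum.inl ⁻¹' t, this, ?_⟩
  intro f hf
  exact hg ⟨f, hf, rfl⟩

end Aux

/-- let `T = ⟨P, 𝒢, O⟩` be a plan-recognition theory with `O`
pairwise distinct and `P' = P.transform O` the transformed domain with cost
`c(o_a) = c(a)`.  For every goal `G ⊆ F`, `G` is solvable in `P` iff `G` is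
solvable in `P'`, and in that case `c*_P(G) = c*_{P'}(G)`: the new actions
`o_a` neither enable new plans for `G` nor change the optimal cost of
achieving `G`. -/
theorem transform_preserves_solvability_and_cstar
    {F A : Type} [Finite F] [Finite A]
    (P : Strips F A) (𝒢 : Set (Set F)) (O : List A) (hO : O.Nodup)
    (c : A → ℝ) (hc : ∀ a, 0 ≤ c a) :
    ∀ G : Set F,
      ((∃ π, P.IsPlan G π) ↔
        (∃ π', (P.transform O).IsPlan (Sum.inl '' G) π')) ∧
      ((∃ π, P.IsPlan G π) →
        P.cstar c G = (P.transform O).cstar (costTransform c O) (Sum.inl '' G)) := by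
  intro G
  have hsets : Strips.planCost c '' {π | P.IsPlan G π} =
      Strips.planCost (costTransform c O) '' {π' | (P.transform O).IsPlan (Sum.inl '' G) π'} := by
    ext r
    constructor
    · rintro ⟨π, hπ, rfl⟩
      exact ⟨π.map Sum.inl, plan_embed P O G π hπ, cost_embed c O π⟩
    · rintro ⟨π', hπ', rfl⟩
      exact ⟨π'.map (projA O), plan_proj P O G π' hπ', (cost_proj c O π').symm⟩
  constructor
  · constructor
    · rintro ⟨π, hπ⟩
      exact ⟨π.map Sum.inl, plan_embed P O G π hπ⟩
    · rintro ⟨π', hπ'⟩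
      exact ⟨π'.map (projA O), plan_proj P O G π' hπ'⟩
  · intro _
    unfold Strips.cstar
    rw [hsets]
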